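/- Weakening is admissible in the multimodal natural deduction system: if Γ, φ@μ, Δ is a well-formed context at mode p and Γ, Δ ⊢ C @ p is derivable, then Γ, φ@μ, Δ ⊢ C @ p is derivable. -/

import Mathlib

/-!
Multimodal intuitionistic logic (MTT's logical fragment), parametrized by a
mode theory, i.e. a strict 2-category `Md`: objects are modes, 1-cells are
modalities, 2-cells are transformations.
-/

open CategoryTheory

universe w v u

/-- Well-formed formulas of the multimodal logic, indexed by their mode. -/
inductive Fm (Md : Type u) [Bicategory.{w, v, u} Md] : Md → Type (max u v) where
  | pvar {m : Md} (i : ℕ) : Fm Md m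
  | tru {m : Md} : Fm Md m
  | fls {m : Md} : Fm Md m
  | conj {m : Md} : Fm Md m → Fm Md m → Fm Md m
  | disj {m : Md} : Fm Md m → Fm Md m → Fm Md m
  | impl {n m : Md} (μ : n ⟶ m) : Fm Md n → Fm Md m → Fm Md m
  | mod {n m : Md} (μ : n ⟶ m) : Fm Md n → Fm Md m

/-- (Pre-)contexts: `Cx Md a m` is a context whose base mode is `a` and whose
final (current) mode is `m`.  Extension tags a formula with a modality; a lock
`Γ,🔒_μ` for `μ : n ⟶ m` transports a context at mode `m` to one at mode `n`. -/
inductive Cx (Md : Type u) [Bicategory.{w, v, u} Md] : Md → Md → Type (max u v) where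
  | nil {m : Md} : Cx Md m m
  | ext {a n m : Md} : Cx Md a m → (n ⟶ m) → Fm Md n → Cx Md a m
  | lock {a n m : Md} : Cx Md a m → (n ⟶ m) → Cx Md a n

variable {Md : Type u} [Bicategory.{w, v, u} Md]

namespace Cx

/-- Concatenation of contexts: append the entries of the second to the first. -/
def append {a : Md} : {m p : Md} → Cx Md a m → Cx Md m p → Cx Md a p
  | _, _, Γ, .nil => Γ
  | _, _, Γ, .ext Δ μ φ => .ext (Γ.append Δ) μ φ
  | _, _, Γ, .lock Δ μ => .lock (Γ.append Δ) μ

/-- `locks Γ` is the composite of all the lock modalities occurring in `Γ`: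
`locks(·) = 1`, `locks(Γ, φ@μ) = locks(Γ)`, `locks(Γ,🔒_μ) = locks(Γ) ∘ μ`. -/
def locks : {a m : Md} → Cx Md a m → (m ⟶ a)
  | _, _, .nil => 𝟙 _
  | _, _, .ext Γ _ _ => Γ.locks
  | _, _, .lock Γ μ => μ ≫ Γ.locks

end Cx

/-- The identifications of contexts: the congruence generated by
`Γ,🔒_{1_m} = Γ` and `Γ,🔒_μ,🔒_ν = Γ,🔒_{μ∘ν}`. -/
inductive CxEq : {a m : Md} → Cx Md a m → Cx Md a m → Prop where
  | refl {a m : Md} (Γ : Cx Md a m) : CxEq Γ Γ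
  | symm {a m : Md} {Γ Δ : Cx Md a m} : CxEq Γ Δ → CxEq Δ Γ
  | trans {a m : Md} {Γ Δ Θ : Cx Md a m} : CxEq Γ Δ → CxEq Δ Θ → CxEq Γ Θ
  | ext {a n m : Md} {Γ Δ : Cx Md a m} (μ : n ⟶ m) (φ : Fm Md n) :
      CxEq Γ Δ → CxEq (Γ.ext μ φ) (Δ.ext μ φ)
  | lock {a n m : Md} {Γ Δ : Cx Md a m} (μ : n ⟶ m) :
      CxEq Γ Δ → CxEq (Γ.lock μ) (Δ.lock μ)
  | lock_id {a m : Md} (Γ : Cx Md a m) : CxEq (Γ.lock (𝟙 m)) Γ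
  | lock_comp {a o n m : Md} (Γ : Cx Md a m) (μ : n ⟶ m) (ν : o ⟶ n) :
      CxEq ((Γ.lock μ).lock ν) (Γ.lock (ν ≫ μ))

/-- The natural deduction system of the multimodal logic: `Der Γ φ` means
`Γ ⊢ φ @ m`.  Contexts are identified up to `CxEq` (rule `conv`). -/
inductive Der : {a m : Md} → Cx Md a m → Fm Md m → Prop where
  /-- Variable rule: from `μ : n ⟶ m` and a transformation `α : μ ⇒ locks(Δ)`
  infer `Γ, φ@μ, Δ ⊢ φ @ n`. -/
  | var {a m n : Md} (Γ : Cx Md a m) (μ : n ⟶ m) (φ : Fm Md n) (Δ : Cx Md m n)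
      (α : μ ⟶ Δ.locks) : Der ((Γ.ext μ φ).append Δ) φ
  | truI {a m : Md} (Γ : Cx Md a m) : Der Γ .tru
  | flsE {a m : Md} {Γ : Cx Md a m} {φ : Fm Md m} : Der Γ .fls → Der Γ φ
  | conjI {a m : Md} {Γ : Cx Md a m} {φ ψ : Fm Md m} :
      Der Γ φ → Der Γ ψ → Der Γ (φ.conj ψ)
  | conjE₁ {a m : Md} {Γ : Cx Md a m} {φ ψ : Fm Md m} : Der Γ (φ.conj ψ) → Der Γ φ
  | conjE₂ {a m : Md} {Γ : Cx Md a m} {φ ψ : Fm Md m} : Der Γ (φ.conj ψ) → Der Γ ψ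
  | disjI₁ {a m : Md} {Γ : Cx Md a m} {φ ψ : Fm Md m} : Der Γ φ → Der Γ (φ.disj ψ)
  | disjI₂ {a m : Md} {Γ : Cx Md a m} {φ ψ : Fm Md m} : Der Γ ψ → Der Γ (φ.disj ψ)
  | disjE {a m : Md} {Γ : Cx Md a m} {φ ψ χ : Fm Md m} :
      Der Γ (φ.disj ψ) → Der (Γ.ext (𝟙 m) φ) χ → Der (Γ.ext (𝟙 m) ψ) χ → Der Γ χ
  /-- Implication introduction. -/
  | implI {a n m : Md} {Γ : Cx Md a m} {μ : n ⟶ m} {φ : Fm Md n} {ψ : Fm Md m} :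
      Der (Γ.ext μ φ) ψ → Der Γ (.impl μ φ ψ)
  /-- Modal modus ponens. -/
  | implE {a n m : Md} {Γ : Cx Md a m} {μ : n ⟶ m} {φ : Fm Md n} {ψ : Fm Md m} :
      Der Γ (.impl μ φ ψ) → Der (Γ.lock μ) φ → Der Γ ψ
  /-- Modal introduction. -/
  | modI {a n m : Md} {Γ : Cx Md a m} {μ : n ⟶ m} {φ : Fm Md n} :
      Der (Γ.lock μ) φ → Der Γ (.mod μ φ)
  /-- Modal elimination. -/
  | modE {a o n m : Md} {Γ : Cx Md a m} {ν : o ⟶ n} {μ : n ⟶ m} {φ : Fm Md o}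
      {ψ : Fm Md m} :
      Der (Γ.lock μ) (.mod ν φ) → Der (Γ.ext (ν ≫ μ) φ) ψ → Der Γ ψ
  /-- Contexts are identified up to `CxEq`. -/
  | conv {a m : Md} {Γ Δ : Cx Md a m} {φ : Fm Md m} : CxEq Γ Δ → Der Γ φ → Der Δ φ

section Weakening

variable [Bicategory.Strict Md]

@[simp] theorem Cx.append_nil {a m : Md} (A : Cx Md a m) :
    A.append .nil = A := by simp [Cx.append]

@[simp] theorem Cx.append_ext {a m p n : Md} (A : Cx Md a m) (B : Cx Md m p)
    (μ : n ⟶ p) (φ : Fm Md n) :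
    A.append (B.ext μ φ) = (A.append B).ext μ φ := by simp [Cx.append]

@[simp] theorem Cx.append_lock {a m p n : Md} (A : Cx Md a m) (B : Cx Md m p)
    (μ : n ⟶ p) : A.append (B.lock μ) = (A.append B).lock μ := by simp [Cx.append]

@[simp] theorem Cx.locks_nil {m : Md} : (Cx.nil : Cx Md m m).locks = 𝟙 m := by simp [Cx.locks]

@[simp] theorem Cx.locks_ext {a m n : Md} (A : Cx Md a m) (μ : n ⟶ m)
    (φ : Fm Md n) : (A.ext μ φ).locks = A.locks := by simp [Cx.locks]

@[simp] theorem Cx.locks_lock {a m n : Md} (A : Cx Md a m) (μ : n ⟶ m) :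
    (A.lock μ).locks = μ ≫ A.locks := by simp [Cx.locks]

@[simp] theorem Cx.nil_append {a m : Md} (B : Cx Md a m) :
    (Cx.nil).append B = B := by
  induction B with
  | nil => simp
  | ext B μ φ ih => simp [ih]
  | lock B μ ih => simp [ih]

theorem Cx.append_assoc {a m p q : Md} (A : Cx Md a m) (B : Cx Md m p)
    (C : Cx Md p q) : (A.append B).append C = A.append (B.append C) := by
  induction C with
  | nil => simp
  | ext C μ φ ih => simp [ih]
  | lock C μ ih => simp [ih]

theorem Cx.locks_append {a m p : Md} (A : Cx Md a m) (B : Cx Md m p) :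
    (A.append B).locks = B.locks ≫ A.locks := by
  induction B with
  | nil => simp
  | ext B μ φ ih => simpa using ih
  | lock B μ ih => simp [ih]

/-- Compare two decompositions of the same context. -/
theorem Cx.append_split {a m p q : Md} (A : Cx Md a m) (C : Cx Md a q) :
    ∀ (D : Cx Md q p) (B : Cx Md m p), A.append B = C.append D →
    (∃ E : Cx Md m q, C = A.append E ∧ B = E.append D) ∨
    (∃ E : Cx Md q m, A = C.append E ∧ D = E.append B) := by
  intro D
  induction D with
  | nil =>
      intro B h
      exact .inl ⟨B, by simpa using h.symm, by simp⟩
  | ext D ν φ ih =>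
      intro B h
      cases B with
      | nil =>
          exact .inr ⟨D.ext ν φ, by simpa using h, by simp⟩
      | ext B κ χ =>
          simp only [Cx.append_ext] at h
          injection h with h1 h2 h3 h4 h5
          subst h1
          obtain rfl := eq_of_heq h4
          obtain rfl := eq_of_heq h5
          rcases ih B h3 with ⟨E, rfl, rfl⟩ | ⟨E, rfl, rfl⟩
          · exact .inl ⟨E, rfl, by simp⟩
          · exact .inr ⟨E, rfl, by simp⟩
      | lock B κ =>
          simp only [Cx.append_ext, Cx.append_lock] at h
          cases h
  | lock D ν ih =>
      intro B h
      cases B with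
      | nil =>
          exact .inr ⟨D.lock ν, by simpa using h, by simp⟩
      | ext B κ χ =>
          simp only [Cx.append_ext, Cx.append_lock] at h
          cases h
      | lock B κ =>
          simp only [Cx.append_lock] at h
          injection h with h1 h2 h3 h4
          subst h2
          obtain rfl := eq_of_heq h4
          rcases ih B (eq_of_heq h3) with ⟨E, rfl, rfl⟩ | ⟨E, rfl, rfl⟩
          · exact .inl ⟨E, rfl, by simp⟩
          · exact .inr ⟨E, rfl, by simp⟩

/-- Context identifications preserve decompositions around a formula entry,
including the composite modality of the tail. -/
theorem CxEq.split {a q : Md} {Θ Θ' : Cx Md a q} (h : CxEq Θ Θ') :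
    ∀ {m n : Md} (Γ₀ : Cx Md a m) (μ₀ : n ⟶ m) (φ₀ : Fm Md n) (Δ₀ : Cx Md m q),
    (Θ = (Γ₀.ext μ₀ φ₀).append Δ₀ →
      ∃ (Γ₁ : Cx Md a m) (Δ₁ : Cx Md m q),
        Θ' = (Γ₁.ext μ₀ φ₀).append Δ₁ ∧ Δ₁.locks = Δ₀.locks) ∧
    (Θ' = (Γ₀.ext μ₀ φ₀).append Δ₀ →
      ∃ (Γ₁ : Cx Md a m) (Δ₁ : Cx Md m q),
        Θ = (Γ₁.ext μ₀ φ₀).append Δ₁ ∧ Δ₁.locks = Δ₀.locks) := by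
  induction h with
  | refl Γ =>
      intro m n Γ₀ μ₀ φ₀ Δ₀
      exact ⟨fun h => ⟨Γ₀, Δ₀, h, rfl⟩, fun h => ⟨Γ₀, Δ₀, h, rfl⟩⟩
  | symm _ ih =>
      intro m n Γ₀ μ₀ φ₀ Δ₀
      exact ⟨(ih Γ₀ μ₀ φ₀ Δ₀).2, (ih Γ₀ μ₀ φ₀ Δ₀).1⟩
  | trans _ _ ih1 ih2 =>
      intro m n Γ₀ μ₀ φ₀ Δ₀
      constructor
      · intro h
        obtain ⟨Γ₁, Δ₁, h1, h2⟩ := (ih1 Γ₀ μ₀ φ₀ Δ₀).1 h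
        obtain ⟨Γ₂, Δ₂, h3, h4⟩ := (ih2 Γ₁ μ₀ φ₀ Δ₁).1 h1
        exact ⟨Γ₂, Δ₂, h3, h4.trans h2⟩
      · intro h
        obtain ⟨Γ₁, Δ₁, h1, h2⟩ := (ih2 Γ₀ μ₀ φ₀ Δ₀).2 h
        obtain ⟨Γ₂, Δ₂, h3, h4⟩ := (ih1 Γ₁ μ₀ φ₀ Δ₁).2 h1
        exact ⟨Γ₂, Δ₂, h3, h4.trans h2⟩
  | @ext n' m' Γ Δ ν ψ _ ih =>
      have key : ∀ {Γ Δ : Cx Md a m'},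
          (∀ {m n : Md} (Γ₀ : Cx Md a m) (μ₀ : n ⟶ m) (φ₀ : Fm Md n)
            (Δ₀ : Cx Md m m'), Γ = (Γ₀.ext μ₀ φ₀).append Δ₀ →
            ∃ (Γ₁ : Cx Md a m) (Δ₁ : Cx Md m m'),
              Δ = (Γ₁.ext μ₀ φ₀).append Δ₁ ∧ Δ₁.locks = Δ₀.locks) →
          ∀ {m n : Md} (Γ₀ : Cx Md a m) (μ₀ : n ⟶ m) (φ₀ : Fm Md n)
            (Δ₀ : Cx Md m m'),
            Γ.ext ν ψ = (Γ₀.ext μ₀ φ₀).append Δ₀ →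
            ∃ (Γ₁ : Cx Md a m) (Δ₁ : Cx Md m m'),
              Δ.ext ν ψ = (Γ₁.ext μ₀ φ₀).append Δ₁ ∧
              Δ₁.locks = Δ₀.locks := by
        intro Γ Δ H m n Γ₀ μ₀ φ₀ Δ₀ h
        cases Δ₀ with
        | nil =>
            simp only [Cx.append_nil] at h
            injection h with e1 e2 e3 e4 e5
            subst e1
            obtain rfl := e3
            obtain rfl := eq_of_heq e4
            obtain rfl := eq_of_heq e5
            exact ⟨Δ, .nil, by simp, rfl⟩
        | ext Δ₀ κ χ =>
            simp only [Cx.append_ext] at h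
            injection h with e1 e2 e3 e4 e5
            subst e1
            obtain rfl := eq_of_heq e4
            obtain rfl := eq_of_heq e5
            obtain ⟨Γ₁, Δ₁, rfl, hl⟩ := H Γ₀ μ₀ φ₀ Δ₀ e3
            exact ⟨Γ₁, Δ₁.ext ν ψ, by simp, by simpa using hl⟩
        | lock Δ₀ κ =>
            simp only [Cx.append_lock] at h
            cases h
      intro m n Γ₀ μ₀ φ₀ Δ₀
      exact ⟨key (fun Γ₀' μ₀' φ₀' Δ₀' h => (ih Γ₀' μ₀' φ₀' Δ₀').1 h) Γ₀ μ₀ φ₀ Δ₀,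
             key (fun Γ₀' μ₀' φ₀' Δ₀' h => (ih Γ₀' μ₀' φ₀' Δ₀').2 h) Γ₀ μ₀ φ₀ Δ₀⟩
  | @lock n' m' Γ Δ ν _ ih =>
      have key : ∀ {Γ Δ : Cx Md a m'},
          (∀ {m n : Md} (Γ₀ : Cx Md a m) (μ₀ : n ⟶ m) (φ₀ : Fm Md n)
            (Δ₀ : Cx Md m m'), Γ = (Γ₀.ext μ₀ φ₀).append Δ₀ →
            ∃ (Γ₁ : Cx Md a m) (Δ₁ : Cx Md m m'),
              Δ = (Γ₁.ext μ₀ φ₀).append Δ₁ ∧ Δ₁.locks = Δ₀.locks) →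
          ∀ {m n : Md} (Γ₀ : Cx Md a m) (μ₀ : n ⟶ m) (φ₀ : Fm Md n)
            (Δ₀ : Cx Md m n'),
            Γ.lock ν = (Γ₀.ext μ₀ φ₀).append Δ₀ →
            ∃ (Γ₁ : Cx Md a m) (Δ₁ : Cx Md m n'),
              Δ.lock ν = (Γ₁.ext μ₀ φ₀).append Δ₁ ∧
              Δ₁.locks = Δ₀.locks := by
        intro Γ Δ H m n Γ₀ μ₀ φ₀ Δ₀ h
        cases Δ₀ with
        | nil =>
            simp only [Cx.append_nil] at h
            cases h
        | ext Δ₀ κ χ =>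
            simp only [Cx.append_ext] at h
            cases h
        | lock Δ₀ κ =>
            simp only [Cx.append_lock] at h
            injection h with e0 e1 e2 e3
            subst e1
            obtain rfl := eq_of_heq e3
            obtain ⟨Γ₁, Δ₁, rfl, hl⟩ := H Γ₀ μ₀ φ₀ Δ₀ (eq_of_heq e2)
            exact ⟨Γ₁, Δ₁.lock ν, by simp, by simp [hl]⟩
      intro m n Γ₀ μ₀ φ₀ Δ₀
      exact ⟨key (fun Γ₀' μ₀' φ₀' Δ₀' h => (ih Γ₀' μ₀' φ₀' Δ₀').1 h) Γ₀ μ₀ φ₀ Δ₀,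
             key (fun Γ₀' μ₀' φ₀' Δ₀' h => (ih Γ₀' μ₀' φ₀' Δ₀').2 h) Γ₀ μ₀ φ₀ Δ₀⟩
  | lock_id Γ =>
      intro m n Γ₀ μ₀ φ₀ Δ₀
      constructor
      · intro h
        cases Δ₀ with
        | nil =>
            simp only [Cx.append_nil] at h
            cases h
        | ext Δ₀ κ χ =>
            simp only [Cx.append_ext] at h
            cases h
        | lock Δ₀ κ =>
            simp only [Cx.append_lock] at h
            injection h with e0 e1 e2 e3
            subst e1
            exact ⟨Γ₀, Δ₀, eq_of_heq e2, by
              obtain rfl := eq_of_heq e3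
              simp⟩
      · intro h
        exact ⟨Γ₀, Δ₀.lock (𝟙 _), by simp [h], by simp⟩
  | lock_comp Γ μ' ν' =>
      intro m n Γ₀ μ₀ φ₀ Δ₀
      constructor
      · intro h
        cases Δ₀ with
        | nil =>
            simp only [Cx.append_nil] at h
            cases h
        | ext Δ₀ κ χ =>
            simp only [Cx.append_ext] at h
            cases h
        | lock Δ₀ κ =>
            simp only [Cx.append_lock] at h
            injection h with e0 e1 e2 e3
            subst e1
            obtain rfl := eq_of_heq e3
            have h2 := eq_of_heq e2
            cases Δ₀ with
            | nil =>
                simp only [Cx.append_nil] at h2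
                cases h2
            | ext Δ₀ κ' χ' =>
                simp only [Cx.append_ext] at h2
                cases h2
            | lock Δ₀ κ' =>
                simp only [Cx.append_lock] at h2
                injection h2 with f0 f1 f2 f3
                subst f1
                obtain rfl := eq_of_heq f3
                exact ⟨Γ₀, Δ₀.lock (ν' ≫ μ'), by simp [eq_of_heq f2], by simp⟩
      · intro h
        cases Δ₀ with
        | nil =>
            simp only [Cx.append_nil] at h
            cases h
        | ext Δ₀ κ χ =>
            simp only [Cx.append_ext] at h
            cases h
        | lock Δ₀ κ =>
            simp only [Cx.append_lock] at h
            injection h with e0 e1 e2 e3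
            subst e1
            obtain rfl := eq_of_heq e3
            exact ⟨Γ₀, (Δ₀.lock μ').lock ν', by simp [eq_of_heq e2], by simp⟩

theorem Der.weak_aux : ∀ {a q : Md} {Θ : Cx Md a q} {C : Fm Md q}, Der Θ C →
    ∀ {m n : Md} (Γ : Cx Md a m) (Δ : Cx Md m q) (μ : n ⟶ m) (φ : Fm Md n),
    CxEq Θ (Γ.append Δ) → Der ((Γ.ext μ φ).append Δ) C := by
  intro a q Θ C h
  induction h with
  | @var m' n' Γ₀ μ₀ φ₀ Δ₀ α =>
      intro m n Γ Δ μ φ hcx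
      obtain ⟨Γ₁, Δ₁, heq, hl⟩ := (hcx.split Γ₀ μ₀ φ₀ Δ₀).1 rfl
      rcases Cx.append_split Γ (Γ₁.ext μ₀ φ₀) Δ₁ Δ heq with
        ⟨E, hE1, rfl⟩ | ⟨E, rfl, rfl⟩
      · -- the variable lies in `Δ` (or at the boundary)
        cases E with
        | nil =>
            simp only [Cx.append_nil] at hE1
            subst hE1
            simp only [Cx.nil_append]
            have hctx : ((Γ₁.ext μ₀ φ₀).ext μ φ).append Δ₁ =
                (Γ₁.ext μ₀ φ₀).append ((Cx.nil.ext μ φ).append Δ₁) := by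
              rw [← Cx.append_assoc]; simp
            rw [hctx]
            exact Der.var Γ₁ μ₀ φ₀ _
              (α ≫ eqToHom (by simp [Cx.locks_append, hl]))
        | ext E κ χ =>
            simp only [Cx.append_ext] at hE1
            injection hE1 with g1 g2 g3 g4 g5
            subst g1
            obtain rfl := g3
            obtain rfl := eq_of_heq g4
            obtain rfl := eq_of_heq g5
            have hctx : (Γ.ext μ φ).append ((E.ext μ₀ φ₀).append Δ₁) =
                (((Γ.ext μ φ).append E).ext μ₀ φ₀).append Δ₁ := by
              rw [← Cx.append_assoc]; simp
            rw [hctx]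
            exact Der.var _ μ₀ φ₀ _ (α ≫ eqToHom hl.symm)
        | lock E κ =>
            simp only [Cx.append_lock] at hE1
            cases hE1
      · -- the variable lies in `Γ`
        have hctx : (((Γ₁.ext μ₀ φ₀).append E).ext μ φ).append Δ =
            (Γ₁.ext μ₀ φ₀).append ((E.ext μ φ).append Δ) := by
          rw [← Cx.append_assoc]; simp
        rw [hctx]
        refine Der.var Γ₁ μ₀ φ₀ _ (α ≫ eqToHom ?_)
        rw [← hl]
        simp [Cx.locks_append]
  | truI Γ => exact fun _ _ _ _ _ => Der.truI _
  | flsE _ ih => exact fun Γ Δ μ φ hcx => Der.flsE (ih Γ Δ μ φ hcx)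
  | conjI _ _ ih1 ih2 =>
      exact fun Γ Δ μ φ hcx => Der.conjI (ih1 Γ Δ μ φ hcx) (ih2 Γ Δ μ φ hcx)
  | conjE₁ _ ih => exact fun Γ Δ μ φ hcx => Der.conjE₁ (ih Γ Δ μ φ hcx)
  | conjE₂ _ ih => exact fun Γ Δ μ φ hcx => Der.conjE₂ (ih Γ Δ μ φ hcx)
  | disjI₁ _ ih => exact fun Γ Δ μ φ hcx => Der.disjI₁ (ih Γ Δ μ φ hcx)
  | disjI₂ _ ih => exact fun Γ Δ μ φ hcx => Der.disjI₂ (ih Γ Δ μ φ hcx)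
  | disjE _ _ _ ih ih1 ih2 =>
      intro _ _ Γ Δ μ φ hcx
      refine Der.disjE (ih Γ Δ μ φ hcx) ?_ ?_
      · rw [← Cx.append_ext]
        exact ih1 Γ (Δ.ext (𝟙 _) _) μ φ
          (by rw [Cx.append_ext]; exact CxEq.ext _ _ hcx)
      · rw [← Cx.append_ext]
        exact ih2 Γ (Δ.ext (𝟙 _) _) μ φ
          (by rw [Cx.append_ext]; exact CxEq.ext _ _ hcx)
  | implI _ ih =>
      intro _ _ Γ Δ μ φ hcx
      refine Der.implI ?_
      rw [← Cx.append_ext]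
      exact ih Γ (Δ.ext _ _) μ φ
        (by rw [Cx.append_ext]; exact CxEq.ext _ _ hcx)
  | implE _ _ ih1 ih2 =>
      intro _ _ Γ Δ μ φ hcx
      refine Der.implE (ih1 Γ Δ μ φ hcx) ?_
      rw [← Cx.append_lock]
      exact ih2 Γ (Δ.lock _) μ φ
        (by rw [Cx.append_lock]; exact CxEq.lock _ hcx)
  | modI _ ih =>
      intro _ _ Γ Δ μ φ hcx
      refine Der.modI ?_
      rw [← Cx.append_lock]
      exact ih Γ (Δ.lock _) μ φ
        (by rw [Cx.append_lock]; exact CxEq.lock _ hcx)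
  | @modE o' n'' m'' Γ' ν' μ' φ' ψ' _ _ ih1 ih2 =>
      intro _ _ Γ Δ μ φ hcx
      refine Der.modE (ν := ν') (μ := μ') (φ := φ') ?_ ?_
      · rw [← Cx.append_lock]
        exact ih1 Γ (Δ.lock _) μ φ
          (by rw [Cx.append_lock]; exact CxEq.lock _ hcx)
      · rw [← Cx.append_ext]
        exact ih2 Γ (Δ.ext _ _) μ φ
          (by rw [Cx.append_ext]; exact CxEq.ext _ _ hcx)
  | conv hcx' _ ih =>
      intro _ _ Γ Δ μ φ hcx
      exact ih Γ Δ μ φ (CxEq.trans hcx' hcx)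

end Weakening

/-- **Weakening** is admissible: if `Γ, φ@μ, Δ` is a well-formed context at
mode `p` (here enforced by the intrinsic typing of contexts) and
`Γ, Δ ⊢ C @ p`, then `Γ, φ@μ, Δ ⊢ C @ p`. -/
theorem Der.weakening {Md : Type u} [Bicategory.{w, v, u} Md] [Bicategory.Strict Md]
    {a m n p : Md} (Γ : Cx Md a m) (μ : n ⟶ m) (φ : Fm Md n) (Δ : Cx Md m p)
    (C : Fm Md p) (h : Der (Γ.append Δ) C) :
    Der ((Γ.ext μ φ).append Δ) C := by
  exact Der.weak_aux h Γ Δ μ φ (CxEq.refl _)
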